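/- arXiv:2305.17399 — 6 statements merged into one kernel-verified Lean document; each statement's English description precedes it below -/
import Mathlib

section
/- In a multiplicative Lie algebra (G,·,⋆), conjugation by (x⋆y) equals conjugation by the commutator [x,y], i.e. ^{(x⋆y)}(u⋆v) = ^{[x,y]}(u⋆v) for all x,y,u,v ∈ G. -/
/-- A multiplicative Lie algebra (Ellis): a group `G` with a second binary
operation `⋆` satisfying the five identities. `ˣy` denotes `x*y*x⁻¹`. -/
class MulLie (G : Type*) [Group G] where
  star : G → G → G
  star_self : ∀ x : G, star x x = 1
  star_mul_right : ∀ x y z : G, star x (y * z) = star x y * (y * star x z * y⁻¹)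
  star_mul_left : ∀ x y z : G, star (x * y) z = (x * star y z * x⁻¹) * star x z
  jacobi : ∀ x y z : G,
    star (star x y) (y * z * y⁻¹) * star (star y z) (z * x * z⁻¹) *
      star (star z x) (x * y * x⁻¹) = 1
  conj_star : ∀ x y z : G, z * star x y * z⁻¹ = star (z * x * z⁻¹) (z * y * z⁻¹)

open MulLie
open scoped commutatorElement

/-- Pure group-theoretic cancellation step extracted from the two expansions
of `star (x*u) (y*v)`. -/
lemma mulLie_cancel_aux {G : Type*} [Group G] (x u a b c d : G)
    (h : x * (a * (u * b * u⁻¹)) * x⁻¹ * (c * (u * d * u⁻¹)) =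
        (x * a * x⁻¹) * c * (u * ((x * b * x⁻¹) * d) * u⁻¹)) :
    (x * u) * b * (x * u)⁻¹ * c = c * ((u * x) * b * (u * x)⁻¹) := by
  have h2 : u * b * u⁻¹ * x⁻¹ * c * u = x⁻¹ * c * u * x * b * x⁻¹ := by
    apply mul_left_cancel (a := x * a)
    apply mul_right_cancel (b := d * u⁻¹)
    simp only [mul_assoc] at h ⊢
    exact h
  have h3 : x * (u * b * u⁻¹ * x⁻¹ * c * u) * u⁻¹ = x * (x⁻¹ * c * u * x * b * x⁻¹) * u⁻¹ := by
    rw [h2]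
  simp only [mul_inv_rev]
  calc x * u * b * (u⁻¹ * x⁻¹) * c
      = x * (u * b * u⁻¹ * x⁻¹ * c * u) * u⁻¹ := by group
    _ = x * (x⁻¹ * c * u * x * b * x⁻¹) * u⁻¹ := h3
    _ = c * (u * x * b * (x⁻¹ * u⁻¹)) := by group

/-- Key commutation relation, obtained by expanding `star (x*u) (y*v)` in the
two possible orders. -/
lemma mulLie_key {G : Type*} [Group G] [MulLie G] (x y u v : G) :
    (x * y) * star u v * (x * y)⁻¹ * star x y =
      star x y * ((y * x) * star u v * (y * x)⁻¹) := by
  apply mulLie_cancel_aux x y (star u y) (star u v) (star x y) (star x v)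
  have A : star (x * u) (y * v) =
      x * (star u y * (y * star u v * y⁻¹)) * x⁻¹ * (star x y * (y * star x v * y⁻¹)) := by
    rw [star_mul_left, star_mul_right, star_mul_right]
  have B : star (x * u) (y * v) =
      (x * star u y * x⁻¹) * star x y * (y * ((x * star u v * x⁻¹) * star x v) * y⁻¹) := by
    rw [star_mul_right, star_mul_left, star_mul_left]
  exact A.symm.trans B

/-- Conjugation by `x ⋆ y` agrees with conjugation by the commutator `[x, y]`
on all elements of the form `u ⋆ v`. -/
theorem conj_by_star_eq_conj_by_commutator {G : Type*} [Group G] [MulLie G]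
    (x y u v : G) :
    star x y * star u v * (star x y)⁻¹ = ⁅x, y⁆ * star u v * ⁅x, y⁆⁻¹ := by
  have h1 : (y * x) * star ((y * x)⁻¹ * u * (y * x)) ((y * x)⁻¹ * v * (y * x)) * (y * x)⁻¹
      = star u v := by
    rw [conj_star]
    have e1 : y * x * ((y * x)⁻¹ * u * (y * x)) * (y * x)⁻¹ = u := by group
    have e2 : y * x * ((y * x)⁻¹ * v * (y * x)) * (y * x)⁻¹ = v := by group
    rw [e1, e2]
  have hpq : star ((y * x)⁻¹ * u * (y * x)) ((y * x)⁻¹ * v * (y * x))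
      = (y * x)⁻¹ * star u v * (y * x) := by
    rw [← h1]; group
  have key := mulLie_key x y ((y * x)⁻¹ * u * (y * x)) ((y * x)⁻¹ * v * (y * x))
  rw [h1, hpq] at key
  calc star x y * star u v * (star x y)⁻¹
      = x * y * ((y * x)⁻¹ * star u v * (y * x)) * (x * y)⁻¹ * star x y * (star x y)⁻¹ := by
        rw [key]
    _ = ⁅x, y⁆ * star u v * ⁅x, y⁆⁻¹ := by rw [commutatorElement_def]; group
end

section
/- In a multiplicative Lie algebra (G,·,⋆), [(x⋆y),z] = ([x,y]⋆z) for all x,y,z ∈ G, where [a,b] = aba⁻¹b⁻¹. -/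
open MulLie
open scoped commutatorElement

section Aux

variable {G : Type*} [Group G] [MulLie G]

private lemma star_one_left' (z : G) : star (1 : G) z = 1 := by
  have h := star_mul_left (1 : G) 1 z
  simp only [one_mul, mul_one, inv_one] at h
  -- h : star 1 z = star 1 z * star 1 z
  have : star (1 : G) z * 1 = star (1 : G) z * star (1 : G) z := by
    rw [mul_one, ← h]
  exact (mul_left_cancel this).symm

private lemma star_one_right' (x : G) : star x (1 : G) = 1 := by
  have h := star_mul_right x (1 : G) 1
  simp only [one_mul, mul_one, inv_one] at h
  have : star x (1 : G) * 1 = star x (1 : G) * star x (1 : G) := by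
    rw [mul_one, ← h]
  exact (mul_left_cancel this).symm

private lemma star_inv_right' (x y : G) :
    star x y⁻¹ = y⁻¹ * (star x y)⁻¹ * y := by
  have h := star_mul_right x y⁻¹ y
  rw [inv_mul_cancel, star_one_right'] at h
  -- h : 1 = star x y⁻¹ * (y⁻¹ * star x y * y⁻¹⁻¹)
  have h2 : star x y⁻¹ * (y⁻¹ * star x y * y⁻¹⁻¹) = 1 := h.symm
  rw [inv_inv] at h2
  have h3 := eq_inv_of_mul_eq_one_left h2
  rw [h3]
  group

private lemma star_inv_left' (x z : G) :
    star x⁻¹ z = x⁻¹ * (star x z)⁻¹ * x := by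
  have h := star_mul_left x⁻¹ x z
  rw [inv_mul_cancel, star_one_left'] at h
  have h2 : (x⁻¹ * star x z * x⁻¹⁻¹) * star x⁻¹ z = 1 := h.symm
  have := eq_inv_of_mul_eq_one_right h2
  rw [this]
  group

private lemma star_antisymm' (x y : G) : star y x = (star x y)⁻¹ := by
  have h1 := star_mul_left x y (x * y)
  rw [star_self] at h1
  have h2 := star_mul_right y x y
  rw [star_self, mul_one, mul_inv_cancel, mul_one] at h2
  have h3 := star_mul_right x x y
  rw [star_self, one_mul] at h3
  rw [h2, h3] at h1
  -- h1 : 1 = (x * star y x * x⁻¹) * (x * star x y * x⁻¹)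
  have h4 : (x * (star y x * star x y) * x⁻¹) = 1 := by
    rw [h1]; group
  have h5 : star y x * star x y = 1 := by
    have := congrArg (fun t => x⁻¹ * t * x) h4
    simpa [mul_assoc] using this
  exact eq_inv_of_mul_eq_one_left h5

/-- The key consequence of expanding `(a*b) ⋆ (c*d)` in two different ways:
conjugation by `a*c` followed by right mult. by `a⋆c` equals
left mult. by `a⋆c` followed by conjugation by `c*a`. -/
private lemma key' (a b c d : G) :
    (a * c) * star b d * (a * c)⁻¹ * star a c
      = star a c * ((c * a) * star b d * (c * a)⁻¹) := by
  have e1 : star (a * b) (c * d)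
      = (a * (star b c * (c * star b d * c⁻¹)) * a⁻¹)
        * (star a c * (c * star a d * c⁻¹)) := by
    rw [star_mul_left, star_mul_right, star_mul_right]
  have e2 : star (a * b) (c * d)
      = ((a * star b c * a⁻¹) * star a c)
        * (c * ((a * star b d * a⁻¹) * star a d) * c⁻¹) := by
    rw [star_mul_right, star_mul_left, star_mul_left]
  have e3 := e1.symm.trans e2
  calc (a * c) * star b d * (a * c)⁻¹ * star a c
      = (a * star b c * a⁻¹)⁻¹
          * ((a * (star b c * (c * star b d * c⁻¹)) * a⁻¹)
            * (star a c * (c * star a d * c⁻¹)))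
          * (c * star a d * c⁻¹)⁻¹ := by group
    _ = (a * star b c * a⁻¹)⁻¹
          * (((a * star b c * a⁻¹) * star a c)
            * (c * ((a * star b d * a⁻¹) * star a d) * c⁻¹))
          * (c * star a d * c⁻¹)⁻¹ := by rw [e3]
    _ = star a c * ((c * a) * star b d * (c * a)⁻¹) := by group

/-- Peiffer-type identity: conjugation by `x ⋆ y` agrees with conjugation by
the commutator `x*y*x⁻¹*y⁻¹` on the star value `y ⋆ z`. -/
private lemma peiffer' (x y z : G) :
    star x y * star y z * (star x y)⁻¹
      = (x * y * x⁻¹ * y⁻¹) * star y z * (x * y * x⁻¹ * y⁻¹)⁻¹ := by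
  -- choose b, d so that (y*x) * star b d * (y*x)⁻¹ = star y z
  set u : G := (y * x)⁻¹ with hu
  have hb := conj_star y z u
  -- hb : u * star y z * u⁻¹ = star (u*y*u⁻¹) (u*z*u⁻¹)
  have hk := key' x (u * y * u⁻¹) y (u * z * u⁻¹)
  rw [← hb] at hk
  -- hk : (x*y) * (u * star y z * u⁻¹) * (x*y)⁻¹ * star x y
  --        = star x y * ((y*x) * (u * star y z * u⁻¹) * (y*x)⁻¹)
  have h1 : (y * x) * (u * star y z * u⁻¹) * (y * x)⁻¹ = star y z := by
    rw [hu]; group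
  have h2 : (x * y) * (u * star y z * u⁻¹) * (x * y)⁻¹
      = (x * y * x⁻¹ * y⁻¹) * star y z * (x * y * x⁻¹ * y⁻¹)⁻¹ := by
    rw [hu]; group
  rw [h1, h2] at hk
  -- hk : c * star y z * c⁻¹ * star x y = star x y * star y z
  calc star x y * star y z * (star x y)⁻¹
      = (star x y * star y z) * (star x y)⁻¹ := by group
    _ = ((x * y * x⁻¹ * y⁻¹) * star y z * (x * y * x⁻¹ * y⁻¹)⁻¹ * star x y)
          * (star x y)⁻¹ := by rw [← hk]
    _ = (x * y * x⁻¹ * y⁻¹) * star y z * (x * y * x⁻¹ * y⁻¹)⁻¹ := by group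

end Aux

/-- In a multiplicative Lie algebra, `[(x ⋆ y), z] = ([x, y] ⋆ z)` where
`[a, b] = a * b * a⁻¹ * b⁻¹`. -/
theorem commutator_star_eq_star_commutator {G : Type*} [Group G] [MulLie G]
    (x y z : G) :
    ⁅star x y, z⁆ = star ⁅x, y⁆ z := by
  rw [commutatorElement_def, commutatorElement_def]
  -- abbreviations
  -- Step 1: star (x*y*x⁻¹) z = s * q * (z * s⁻¹ * z⁻¹)
  have hyx : star y x = (star x y)⁻¹ := star_antisymm' x y
  have hzx : star y (x⁻¹ * (z * x))
      = star y x⁻¹ * (x⁻¹ * star y (z * x) * x⁻¹⁻¹) := star_mul_right y x⁻¹ (z * x)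
  have hzx2 : star y (z * x) = star y z * (z * star y x * z⁻¹) := star_mul_right y z x
  have hinv : star y x⁻¹ = x⁻¹ * (star y x)⁻¹ * x := star_inv_right' y x
  have hconj := conj_star y (x⁻¹ * (z * x)) x
  -- hconj : x * star y (x⁻¹*(z*x)) * x⁻¹ = star (x*y*x⁻¹) (x*(x⁻¹*(z*x))*x⁻¹)
  have harg : x * (x⁻¹ * (z * x)) * x⁻¹ = z := by group
  rw [harg] at hconj
  have hA : star (x * y * x⁻¹) z
      = star x y * star y z * (z * (star x y)⁻¹ * z⁻¹) := by
    rw [← hconj, hzx, hzx2, hinv, hyx]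
    group
  -- Step 2: star ((x*y*x⁻¹) * y⁻¹) z = conj * star (x*y*x⁻¹) z
  have hmain := star_mul_left (x * y * x⁻¹) y⁻¹ z
  have hinvy : star y⁻¹ z = y⁻¹ * (star y z)⁻¹ * y := star_inv_left' y z
  have hP := peiffer' x y z
  -- assemble
  have hassoc : x * y * x⁻¹ * y⁻¹ = (x * y * x⁻¹) * y⁻¹ := by group
  rw [hassoc, hmain, hA, hinvy]
  -- goal : star x y * z * (star x y)⁻¹ * z⁻¹
  --   = ((x*y*x⁻¹) * (y⁻¹ * (star y z)⁻¹ * y) * (x*y*x⁻¹)⁻¹)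
  --       * (star x y * star y z * (z * (star x y)⁻¹ * z⁻¹))
  have hP' : (x * y * x⁻¹) * (y⁻¹ * (star y z)⁻¹ * y) * (x * y * x⁻¹)⁻¹
      = star x y * (star y z)⁻¹ * (star x y)⁻¹ := by
    calc (x * y * x⁻¹) * (y⁻¹ * (star y z)⁻¹ * y) * (x * y * x⁻¹)⁻¹
        = ((x * y * x⁻¹ * y⁻¹) * star y z * (x * y * x⁻¹ * y⁻¹)⁻¹)⁻¹ := by group
      _ = (star x y * star y z * (star x y)⁻¹)⁻¹ := by rw [← hP]
      _ = star x y * (star y z)⁻¹ * (star x y)⁻¹ := by group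
  rw [hP']
  group
end

section
/- Let (G,·,⋆) be a multiplicative Lie algebra and H an ideal of G. Then the subgroup (G⋆H)[G,H] generated by all elements g⋆h (g ∈ G, h ∈ H) together with all commutators [g,h] (g ∈ G, h ∈ H) is an ideal of G. -/
open MulLie
open scoped commutatorElement

/-- An ideal of a multiplicative Lie algebra: a normal subgroup closed under
`g ⋆ h` for all `g ∈ G`, `h ∈ H`. -/
def IsMulLieIdeal {G : Type*} [Group G] [MulLie G] (H : Subgroup G) : Prop :=
  H.Normal ∧ ∀ g h : G, h ∈ H → star g h ∈ H

lemma MulLie.star_one {G : Type*} [Group G] [MulLie G] (x : G) : star x 1 = 1 := by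
  have h := star_mul_right x 1 1
  rw [one_mul, one_mul, inv_one, mul_one] at h
  exact (left_eq_mul.mp h)

lemma MulLie.star_inv {G : Type*} [Group G] [MulLie G] (x y : G) :
    star x y⁻¹ = y⁻¹ * (star x y)⁻¹ * y := by
  have h := star_mul_right x y y⁻¹
  rw [mul_inv_cancel, MulLie.star_one] at h
  have h2 : y * star x y⁻¹ * y⁻¹ = (star x y)⁻¹ :=
    eq_inv_of_mul_eq_one_right h.symm
  have : star x y⁻¹ = y⁻¹ * (y * star x y⁻¹ * y⁻¹) * y := by group
  rw [this, h2]

/-- If `H` is an ideal of `G`, then the subgroup `(G ⋆ H)[G, H]` generated by all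
`g ⋆ h` and all commutators `[g, h]` with `g ∈ G`, `h ∈ H` is an ideal of `G`. -/
theorem mixed_commutator_isIdeal {G : Type*} [Group G] [MulLie G]
    (H : Subgroup G) (hH : IsMulLieIdeal H) :
    IsMulLieIdeal (Subgroup.closure
      {z : G | ∃ g h : G, h ∈ H ∧ (z = star g h ∨ z = ⁅g, h⁆)}) := by
  obtain ⟨hN, hS⟩ := hH
  set S : Set G := {z : G | ∃ g h : G, h ∈ H ∧ (z = star g h ∨ z = ⁅g, h⁆)} with hSdef
  set K := Subgroup.closure S with hK
  -- every generator lies in H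
  have genH : ∀ s ∈ S, s ∈ H := by
    rintro s ⟨g, h, hh, rfl | rfl⟩
    · exact hS g h hh
    · rw [commutatorElement_def]
      exact mul_mem (hN.conj_mem h hh g) (inv_mem hh)
  have normalK : K.Normal := by
    constructor
    intro n hn z
    induction hn using Subgroup.closure_induction with
    | mem s hs =>
        obtain ⟨g, h, hh, rfl | rfl⟩ := hs
        · exact Subgroup.subset_closure
            ⟨z * g * z⁻¹, z * h * z⁻¹, hN.conj_mem h hh z, Or.inl (conj_star g h z)⟩
        · refine Subgroup.subset_closure
            ⟨z * g * z⁻¹, z * h * z⁻¹, hN.conj_mem h hh z, Or.inr ?_⟩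
          simp only [commutatorElement_def]
          group
    | one => simpa using one_mem K
    | mul x y hx hy ihx ihy =>
        have : z * (x * y) * z⁻¹ = (z * x * z⁻¹) * (z * y * z⁻¹) := by group
        rw [this]; exact mul_mem ihx ihy
    | inv x hx ih =>
        have : z * x⁻¹ * z⁻¹ = (z * x * z⁻¹)⁻¹ := by group
        rw [this]; exact inv_mem ih
  refine ⟨normalK, fun g x hx => ?_⟩
  induction hx using Subgroup.closure_induction with
  | mem s hs => exact Subgroup.subset_closure ⟨g, s, genH s hs, Or.inl rfl⟩
  | one => rw [MulLie.star_one]; exact one_mem K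
  | mul x y hx hy ihx ihy =>
      rw [star_mul_right]
      exact mul_mem ihx (normalK.conj_mem _ ihy x)
  | inv x hx ih =>
      rw [MulLie.star_inv]
      have h3 : x⁻¹ * (star g x)⁻¹ * x = x⁻¹ * (star g x)⁻¹ * (x⁻¹)⁻¹ := by group
      rw [h3]
      exact normalK.conj_mem _ (inv_mem ih) x⁻¹
end

section
/- If a multiplicative Lie algebra G is M𝒵-nilpotent (i.e. some term M_n(G) of the series M_0(G) = G, M_{n+1}(G) = (G⋆M_n(G))[G,M_n(G)] equals {1}), then the underlying group (G,·) is a nilpotent group. -/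
open MulLie
open scoped commutatorElement

/-- The lower central series of a multiplicative Lie algebra:
`M₀(G) = G`, `M_{n+1}(G) = (G ⋆ Mₙ(G))[G, Mₙ(G)]`. -/
def Mser (G : Type*) [Group G] [MulLie G] : ℕ → Subgroup G
  | 0 => ⊤
  | n + 1 => Subgroup.closure
      {z : G | ∃ g m : G, m ∈ Mser G n ∧ (z = star g m ∨ z = ⁅g, m⁆)}

lemma lcs_le_Mser (G : Type*) [Group G] [MulLie G] (n : ℕ) :
    (⊤ : Subgroup G).lowerCentralSeries n ≤ Mser G n := by
  induction n with
  | zero => exact le_top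
  | succ n ih =>
    rw [Subgroup.lowerCentralSeries_succ]
    refine Subgroup.closure_le _ |>.mpr ?_
    rintro x ⟨p, hp, q, -, rfl⟩
    have : ⁅q, p⁆ ∈ Mser G (n + 1) :=
      Subgroup.subset_closure ⟨q, p, ih hp, Or.inr rfl⟩
    have h2 := (Mser G (n + 1)).inv_mem this
    have : (⁅q, p⁆ : G)⁻¹ = p * q * p⁻¹ * q⁻¹ := by
      simp [commutatorElement_def, mul_assoc]
    rwa [this] at h2

/-- If `G` is `M𝒵`-nilpotent, then the underlying group of `G` is nilpotent. -/
theorem isNilpotent_of_MZnilpotent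
    (G : Type*) [Group G] [MulLie G] (h : ∃ n : ℕ, Mser G n = ⊥) :
    Group.IsNilpotent G := by
  obtain ⟨n, hn⟩ := h
  exact Subgroup.nilpotent_iff_lowerCentralSeries.mpr
    ⟨n, le_bot_iff.mp (hn ▸ lcs_le_Mser G n)⟩
end

section
/- Let {N_i}_{i∈I} be a family of ideals of a multiplicative Lie algebra G such that each quotient G/N_i is Lie capable. Then G/(⋂_{i∈I} N_i) is Lie capable. -/
open MulLie

/-- `𝒵(G) = LZ(G) ∩ Z(G)`: the elements that are in the Lie center and in the
group center. -/
def zSet (G : Type u) [Group G] [MulLie G] : Set G :=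
  {x : G | (∀ y : G, star x y = 1) ∧ ∀ y : G, x * y = y * x}

/-- A central extension `1 → ker f → E → G → 1` of the multiplicative Lie
algebra `G`: a surjective multiplicative Lie algebra homomorphism `f : E → G`
whose kernel is contained in `Z(E) ∩ LZ(E)`. -/
structure CentralExtOf (G : Type u) [Group G] [MulLie G] : Type (u + 1) where
  E : Type u
  [grp : Group E]
  [lie : MulLie E]
  f : E →* G
  surj : Function.Surjective f
  map_star : ∀ x y : E, f (MulLie.star x y) = star (f x) (f y)
  central : ∀ x : E, f x = 1 → x ∈ zSet E

attribute [instance] CentralExtOf.grp CentralExtOf.lie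

/-- A multiplicative Lie algebra `G` is Lie capable if `G ≅ E/𝒵(E)` for some
multiplicative Lie algebra `E`, i.e. there is a surjective multiplicative Lie
algebra homomorphism `E → G` whose kernel is exactly `𝒵(E)`. -/
def LieCapable (G : Type u) [Group G] [MulLie G] : Prop :=
  ∃ C : CentralExtOf G, ∀ x : C.E, C.f x = 1 ↔ x ∈ zSet C.E


/-- Componentwise multiplicative Lie structure on a product. -/
instance piMulLie {ι : Type*} {E : ι → Type*} [∀ i, Group (E i)] [∀ i, MulLie (E i)] :
    MulLie (∀ i, E i) where
  star x y := fun i => star (x i) (y i)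
  star_self x := funext fun i => star_self (x i)
  star_mul_right x y z := funext fun i => star_mul_right (x i) (y i) (z i)
  star_mul_left x y z := funext fun i => star_mul_left (x i) (y i) (z i)
  jacobi x y z := funext fun i => jacobi (x i) (y i) (z i)
  conj_star x y z := funext fun i => conj_star (x i) (y i) (z i)

/-- A subgroup closed under `star` inherits a multiplicative Lie structure. -/
def subMulLie {G : Type*} [Group G] [MulLie G] (H : Subgroup G)
    (hst : ∀ x y : G, x ∈ H → y ∈ H → star x y ∈ H) : MulLie H where
  star x y := ⟨star x.1 y.1, hst _ _ x.2 y.2⟩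
  star_self x := Subtype.ext (star_self x.1)
  star_mul_right x y z := Subtype.ext (star_mul_right x.1 y.1 z.1)
  star_mul_left x y z := Subtype.ext (star_mul_left x.1 y.1 z.1)
  jacobi x y z := Subtype.ext (jacobi x.1 y.1 z.1)
  conj_star x y z := Subtype.ext (conj_star x.1 y.1 z.1)

/-- If `{Nᵢ}` is a family of ideals of `G` (realized as kernels of surjective
multiplicative Lie algebra homomorphisms `qᵢ : G → Qᵢ` onto the quotients
`Qᵢ = G/Nᵢ`) such that each `G/Nᵢ` is Lie capable, then `G/(⋂ᵢ Nᵢ)` is Lie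
capable. -/
theorem lieCapable_quotient_iInf {G : Type u} [Group G] [MulLie G]
    {ι : Type u} (N : ι → Subgroup G)
    (Q : ι → Type u) [∀ i, Group (Q i)] [∀ i, MulLie (Q i)]
    (q : ∀ i, G →* Q i) (hqsurj : ∀ i, Function.Surjective (q i))
    (hqstar : ∀ i, ∀ x y : G, q i (star x y) = star (q i x) (q i y))
    (hqker : ∀ i, (q i).ker = N i)
    (hcap : ∀ i, LieCapable (Q i))
    (Q' : Type u) [Group Q'] [MulLie Q'] (p : G →* Q')
    (hpsurj : Function.Surjective p)
    (hpstar : ∀ x y : G, p (star x y) = star (p x) (p y))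
    (hpker : p.ker = ⨅ i, N i) :
    LieCapable Q' := by
  classical
  choose C hC using hcap
  -- the compatible-tuples subgroup of the product
  let P : (∀ i, (C i).E) → Prop := fun e => ∃ g : G, ∀ i, (C i).f (e i) = q i g
  let H : Subgroup (∀ i, (C i).E) :=
    { carrier := setOf P
      one_mem' := ⟨1, fun i => by simp⟩
      mul_mem' := by
        rintro a b ⟨ga, hga⟩ ⟨gb, hgb⟩
        exact ⟨ga * gb, fun i => by
          show (C i).f (a i * b i) = q i (ga * gb)
          rw [map_mul, map_mul, hga i, hgb i]⟩
      inv_mem' := by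
        rintro a ⟨ga, hga⟩
        exact ⟨ga⁻¹, fun i => by
          show (C i).f (a i)⁻¹ = q i ga⁻¹
          rw [map_inv, map_inv, hga i]⟩ }
  have hstarmem : ∀ x y : (∀ i, (C i).E), x ∈ H → y ∈ H → MulLie.star x y ∈ H := by
    rintro x y ⟨gx, hgx⟩ ⟨gy, hgy⟩
    exact ⟨star gx gy, fun i => by
      show (C i).f (star (x i) (y i)) = q i (star gx gy)
      rw [(C i).map_star, hqstar, hgx i, hgy i]⟩
  letI instH : MulLie H := subMulLie H hstarmem
  have hP : ∀ e : H, P e.1 := fun e => e.2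
  let gw : H → G := fun e => Classical.choose (hP e)
  have gw_spec : ∀ (e : H) (i : ι), (C i).f (e.1 i) = q i (gw e) :=
    fun e => Classical.choose_spec (hP e)
  -- if two elements of G agree on all q i, they agree on p
  have hpq : ∀ g g' : G, (∀ i, q i g = q i g') → p g = p g' := by
    intro g g' h
    have hm : g⁻¹ * g' ∈ p.ker := by
      rw [hpker, Subgroup.mem_iInf]
      intro i
      rw [← hqker i]
      simp [MonoidHom.mem_ker, h i]
    have h1 : p (g⁻¹ * g') = 1 := hm
    rw [map_mul, map_inv] at h1
    exact inv_mul_eq_one.mp h1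
  have F_eq : ∀ (e : H) (g : G), (∀ i, (C i).f (e.1 i) = q i g) → p (gw e) = p g :=
    fun e g hg => hpq _ _ (fun i => by rw [← gw_spec e i, hg i])
  let fhom : H →* Q' :=
    { toFun := fun e => p (gw e)
      map_one' := by
        have h1 : p (gw 1) = p 1 := F_eq 1 1 (fun i => by
          show (C i).f 1 = q i 1
          simp)
        simpa using h1
      map_mul' := by
        intro a b
        have h1 : p (gw (a * b)) = p (gw a * gw b) := F_eq (a * b) _ (fun i => by
          show (C i).f (a.1 i * b.1 i) = q i (gw a * gw b)
          rw [map_mul, map_mul, gw_spec a i, gw_spec b i])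
        simp only [h1, map_mul] }
  have fhom_star : ∀ a b : H, fhom (MulLie.star a b) = star (fhom a) (fhom b) := by
    intro a b
    have h1 : p (gw (MulLie.star a b)) = p (star (gw a) (gw b)) :=
      F_eq _ _ (fun i => by
        show (C i).f (star (a.1 i) (b.1 i)) = q i (star (gw a) (gw b))
        rw [(C i).map_star, hqstar, gw_spec a i, gw_spec b i])
    show p (gw (MulLie.star a b)) = star (p (gw a)) (p (gw b))
    rw [h1, hpstar]
  have fhom_surj : Function.Surjective fhom := by
    intro z
    obtain ⟨g, hg⟩ := hpsurj z
    choose e he using fun i => (C i).surj (q i g)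
    refine ⟨⟨e, ⟨g, he⟩⟩, ?_⟩
    show p (gw ⟨e, ⟨g, he⟩⟩) = z
    rw [F_eq ⟨e, ⟨g, he⟩⟩ g he, hg]
  have key : ∀ x : H, fhom x = 1 ↔ x ∈ zSet H := by
    intro x
    constructor
    · intro hx
      have hk : gw x ∈ p.ker := hx
      rw [hpker, Subgroup.mem_iInf] at hk
      have hq1 : ∀ i, (C i).f (x.1 i) = 1 := by
        intro i
        have : gw x ∈ (q i).ker := by rw [hqker i]; exact hk i
        rw [gw_spec x i]
        exact this
      have hz : ∀ i, x.1 i ∈ zSet ((C i).E) := fun i => (C i).central _ (hq1 i)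
      exact ⟨fun y => Subtype.ext (funext fun i => (hz i).1 (y.1 i)),
             fun y => Subtype.ext (funext fun i => (hz i).2 (y.1 i))⟩
    · intro hx
      obtain ⟨hx1, hx2⟩ := hx
      have hq1 : ∀ i, (C i).f (x.1 i) = 1 := by
        intro i
        rw [hC i]
        have hmk : ∀ y : (C i).E, ∃ y' : H, y'.1 i = y := by
          intro y
          obtain ⟨g', hg'⟩ := hqsurj i ((C i).f y)
          choose e he using fun j => (C j).surj (q j g')
          refine ⟨⟨Function.update e i y, ⟨g', fun j => ?_⟩⟩, ?_⟩
          · by_cases hj : j = i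
            · subst hj; rw [Function.update_self]; exact hg'.symm
            · rw [Function.update_of_ne hj]; exact he j
          · exact Function.update_self i y e
        constructor
        · intro y
          obtain ⟨y', hy'⟩ := hmk y
          have h1 := hx1 y'
          have h2 : star (x.1 i) (y'.1 i) = 1 := congrFun (congrArg Subtype.val h1) i
          rwa [hy'] at h2
        · intro y
          obtain ⟨y', hy'⟩ := hmk y
          have h1 := hx2 y'
          have h2 : x.1 i * y'.1 i = y'.1 i * x.1 i := congrFun (congrArg Subtype.val h1) i
          rwa [hy'] at h2
      have hk : gw x ∈ p.ker := by
        rw [hpker, Subgroup.mem_iInf]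
        intro i
        rw [← hqker i]
        show q i (gw x) = 1
        rw [← gw_spec x i]
        exact hq1 i
      exact hk
  exact ⟨{ E := H, f := fhom, surj := fhom_surj, map_star := fhom_star,
           central := fun x h => (key x).mp h }, key⟩
end

section
/- Let G be a finite perfect multiplicative Lie algebra with trivial Schur multiplier M̃(G) = 1, and let 1 → 1 → H →^φ G → 1 be a universal central extension of G. Then the identity extension 1 → 1 → G →^{id} G → 1 is also universal; consequently every central extension 1 → N → K →^ψ G → 1 of G splits. -/
open MulLie
open scoped commutatorElement

/-- A central extension is universal if every central extension of `G` receives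
a unique multiplicative Lie algebra homomorphism from it commuting with the
projections to `G`. -/
def IsUniversal {G : Type u} [Group G] [MulLie G] (C : CentralExtOf G) : Prop :=
  ∀ D : CentralExtOf G, ∃! θ : C.E →* D.E,
    (∀ x y : C.E, θ (star x y) = star (θ x) (θ y)) ∧ ∀ x : C.E, D.f (θ x) = C.f x


lemma one_star {G : Type u} [Group G] [MulLie G] (y : G) : star (1 : G) y = 1 := by
  have h := star_mul_left (1 : G) 1 y
  simp only [one_mul, mul_one, inv_one] at h
  exact mul_left_cancel (a := star (1 : G) y) (by rw [mul_one]; exact h.symm)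

/-- The identity extension `1 → 1 → G → G → 1`. -/
def idExt (G : Type u) [Group G] [MulLie G] : CentralExtOf G where
  E := G
  f := MonoidHom.id G
  surj := Function.surjective_id
  map_star _ _ := rfl
  central x hx := by
    subst hx
    exact ⟨fun y => one_star y, fun y => by simp⟩

/-- Let `G` be a finite perfect multiplicative Lie algebra with trivial Schur
multiplier, i.e. admitting a universal central extension `1 → 1 → H → G → 1`
with trivial kernel. Then the identity extension `1 → 1 → G → G → 1` is also
universal, and consequently every central extension of `G` splits. -/
theorem idExt_universal_and_splits {G : Type u} [Group G] [MulLie G] [Finite G]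
    (hperf : Subgroup.closure
      {z : G | ∃ a b : G, z = star a b ∨ z = ⁅a, b⁆} = ⊤)
    (C : CentralExtOf G) (hinj : Function.Injective C.f)
    (huniv : IsUniversal C) :
    IsUniversal (idExt G) ∧
      ∀ D : CentralExtOf G, ∃ s : G →* D.E,
        (∀ x y : G, s (star x y) = star (s x) (s y)) ∧
          ∀ g : G, D.f (s g) = g := by
  have hbij : Function.Bijective C.f := ⟨hinj, C.surj⟩
  set e := (MulEquiv.ofBijective C.f hbij).symm with he
  have hfe : ∀ g : G, C.f (e g) = g := fun g =>
    (MulEquiv.ofBijective C.f hbij).apply_symm_apply g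
  have hestar : ∀ x y : G, e (star x y) = star (e x) (e y) := by
    intro x y
    apply hinj
    rw [hfe, C.map_star, hfe, hfe]
  have key : ∀ D : CentralExtOf G, ∃! θ : G →* D.E,
      (∀ x y : G, θ (star x y) = star (θ x) (θ y)) ∧ ∀ x : G, D.f (θ x) = x := by
    intro D
    obtain ⟨θ, ⟨hθs, hθf⟩, huniq⟩ := huniv D
    refine ⟨θ.comp e.toMonoidHom, ⟨?_, ?_⟩, ?_⟩
    · intro x y
      simp only [MonoidHom.comp_apply, MulEquiv.coe_toMonoidHom, hestar, hθs]
    · intro x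
      simp only [MonoidHom.comp_apply, MulEquiv.coe_toMonoidHom, hθf, hfe]
    · rintro ψ ⟨hψs, hψf⟩
      have h1 : ψ.comp C.f = θ := by
        apply huniq
        constructor
        · intro x y
          simp only [MonoidHom.comp_apply, C.map_star, hψs]
        · intro x
          simp only [MonoidHom.comp_apply, hψf]
      ext g
      have h2 : ψ (C.f (e g)) = θ (e g) := by
        rw [← h1]; rfl
      rw [hfe] at h2
      simpa using h2
  refine ⟨fun D => key D, fun D => ?_⟩
  obtain ⟨s, ⟨hs1, hs2⟩, -⟩ := key D
  exact ⟨s, hs1, hs2⟩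
end
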